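/- There exists a continuous function f : ℝ → ℝ with f(0) = 0 that is 2-subadditive but not 1-subadditive (i.e., not subadditive). In particular, S_1 ≠ S_2. -/

import Mathlib

noncomputable def dInt (t : ℝ) : ℝ := |t - round t|

lemma dInt_nonneg (t : ℝ) : 0 ≤ dInt t := abs_nonneg _

lemma dInt_le (t : ℝ) (n : ℤ) : dInt t ≤ |t - n| := by
  by_cases h : n = round t
  · simp [dInt, h]
  · have h1 : |t - (round t : ℝ)| ≤ 1/2 := abs_sub_round t
    have h2 : (1 : ℝ) ≤ |(round t : ℝ) - n| := by
      have : round t - n ≠ 0 := sub_ne_zero.mpr (fun hc => h hc.symm)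
      have := Int.one_le_abs this
      calc (1:ℝ) ≤ |(round t - n : ℤ)| := by exact_mod_cast this
        _ = |(round t : ℝ) - n| := by push_cast; ring_nf
    have h3 : |(round t : ℝ) - n| ≤ |t - round t| + |t - n| := by
      calc |(round t : ℝ) - n| = |(t - n) - (t - round t)| := by ring_nf
      _ ≤ |t - n| + |t - round t| := abs_sub _ _
      _ = |t - round t| + |t - n| := by ring
    unfold dInt; linarith

lemma dInt_lip (a b : ℝ) : dInt a ≤ |a - b| + dInt b := by
  have h := dInt_le a (round b)
  have h2 : |a - (round b : ℝ)| ≤ |a - b| + |b - round b| := by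
    calc |a - (round b : ℝ)| = |(a - b) + (b - round b)| := by ring_nf
    _ ≤ |a - b| + |b - round b| := abs_add_le _ _
  unfold dInt at *; linarith

lemma dInt_add_int (t : ℝ) (m : ℤ) : dInt (t + m) = dInt t := by
  unfold dInt
  rw [round_add_intCast]
  push_cast
  ring_nf

noncomputable def fEx (x : ℝ) : ℝ :=
  min (min 1 (8 * dInt x)) (min (8 * dInt (x - 1/2)) (1/2 + 4 * dInt (x - 3/4)))

lemma fEx_nonneg (x : ℝ) : 0 ≤ fEx x := by
  have h1 := dInt_nonneg x
  have h2 := dInt_nonneg (x - 1/2)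
  have h3 := dInt_nonneg (x - 3/4)
  unfold fEx
  simp only [le_min_iff]
  refine ⟨⟨by norm_num, by linarith⟩, by linarith, by linarith⟩

lemma fEx_le_one (x : ℝ) : fEx x ≤ 1 :=
  le_trans (min_le_left _ _) (min_le_left _ _)

lemma fEx_add_int (x : ℝ) (m : ℤ) : fEx (x + m) = fEx x := by
  unfold fEx
  rw [show x + (m:ℝ) - 1/2 = (x - 1/2) + m by ring,
      show x + (m:ℝ) - 3/4 = (x - 3/4) + m by ring,
      dInt_add_int, dInt_add_int, dInt_add_int]

lemma fEx_cases (x : ℝ) : fEx x = 1 ∨ fEx x = 8 * dInt x ∨ fEx x = 8 * dInt (x - 1/2)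
    ∨ fEx x = 1/2 + 4 * dInt (x - 3/4) := by
  unfold fEx
  rcases min_cases (min 1 (8 * dInt x)) (min (8 * dInt (x - 1/2)) (1/2 + 4 * dInt (x - 3/4)))
    with ⟨he, _⟩ | ⟨he, _⟩ <;> rw [he]
  · rcases min_cases 1 (8 * dInt x) with ⟨he2, _⟩ | ⟨he2, _⟩ <;> rw [he2]
    · exact Or.inl rfl
    · exact Or.inr (Or.inl rfl)
  · rcases min_cases (8 * dInt (x - 1/2)) (1/2 + 4 * dInt (x - 3/4))
      with ⟨he2, _⟩ | ⟨he2, _⟩ <;> rw [he2]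
    · exact Or.inr (Or.inr (Or.inl rfl))
    · exact Or.inr (Or.inr (Or.inr rfl))

lemma fEx_lip (a b : ℝ) : fEx a ≤ 8 * |a - b| + fEx b := by
  have hab : (0:ℝ) ≤ |a - b| := abs_nonneg _
  have l1 := dInt_lip a b
  have l2 := dInt_lip (a - 1/2) (b - 1/2)
  have l3 := dInt_lip (a - 3/4) (b - 3/4)
  rw [show a - 1/2 - (b - 1/2) = a - b by ring] at l2
  rw [show a - 3/4 - (b - 3/4) = a - b by ring] at l3
  have h1 : fEx a ≤ 1 := fEx_le_one a
  have h2 : fEx a ≤ 8 * dInt a := le_trans (min_le_left _ _) (min_le_right _ _)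
  have h3 : fEx a ≤ 8 * dInt (a - 1/2) :=
    le_trans (min_le_right _ _) (min_le_left _ _)
  have h4 : fEx a ≤ 1/2 + 4 * dInt (a - 3/4) :=
    le_trans (min_le_right _ _) (min_le_right _ _)
  rcases fEx_cases b with hb | hb | hb | hb <;> rw [hb] <;> linarith

lemma fEx_small (x : ℝ) (h : fEx x < 1/2) :
    fEx x = min (8 * dInt x) (8 * dInt (x - 1/2)) := by
  have h3 := dInt_nonneg (x - 3/4)
  have h2 : fEx x ≤ 8 * dInt x := le_trans (min_le_left _ _) (min_le_right _ _)
  have h2' : fEx x ≤ 8 * dInt (x - 1/2) :=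
    le_trans (min_le_right _ _) (min_le_left _ _)
  have hle : fEx x ≤ min (8 * dInt x) (8 * dInt (x - 1/2)) := le_min h2 h2'
  have hge : min (8 * dInt x) (8 * dInt (x - 1/2)) ≤ fEx x := by
    rcases fEx_cases x with hx | hx | hx | hx
    · exfalso; rw [hx] at h; linarith
    · rw [hx]; exact min_le_left _ _
    · rw [hx]; exact min_le_right _ _
    · exfalso; rw [hx] at h; linarith
  exact le_antisymm hle hge

lemma fEx_two_subadd (x y : ℝ) : fEx (2 * x + y) ≤ 2 * fEx x + fEx y := by
  by_cases h : 1/2 ≤ fEx x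
  · have := fEx_le_one (2 * x + y)
    have := fEx_nonneg y
    linarith
  · push_neg at h
    have hm := fEx_small x h
    rcases le_total (dInt x) (dInt (x - 1/2)) with hc | hc
    · have hfx : fEx x = 8 * dInt x := by
        rw [hm]; exact min_eq_left (by linarith)
      have key : fEx (2 * x + y) = fEx (y + 2 * (x - round x)) := by
        rw [show 2 * x + y = (y + 2 * (x - round x)) + ((2 * round x : ℤ) : ℝ) by
          push_cast; ring, fEx_add_int]
      rw [key]
      have hl := fEx_lip (y + 2 * (x - round x)) y
      have habs : |y + 2 * (x - round x) - y| = 2 * dInt x := by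
        rw [show y + 2 * (x - round x) - y = 2 * (x - round x) by ring, abs_mul]
        unfold dInt
        norm_num
      rw [habs] at hl
      linarith
    · have hfx : fEx x = 8 * dInt (x - 1/2) := by
        rw [hm]; exact min_eq_right (by linarith)
      have key : fEx (2 * x + y) = fEx (y + 2 * (x - 1/2 - round (x - 1/2))) := by
        rw [show 2 * x + y =
            (y + 2 * (x - 1/2 - round (x - 1/2))) + ((2 * round (x - 1/2) + 1 : ℤ) : ℝ) by
          push_cast; ring, fEx_add_int]
      rw [key]
      have hl := fEx_lip (y + 2 * (x - 1/2 - round (x - 1/2))) y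
      have habs : |y + 2 * (x - 1/2 - round (x - 1/2)) - y| = 2 * dInt (x - 1/2) := by
        rw [show y + 2 * (x - 1/2 - round (x - 1/2)) - y
            = 2 * (x - 1/2 - round (x - 1/2)) by ring, abs_mul]
        unfold dInt
        norm_num
      rw [habs] at hl
      linarith

lemma dInt_continuous : Continuous dInt := by
  have : LipschitzWith 1 dInt := by
    apply LipschitzWith.of_dist_le_mul
    intro a b
    rw [Real.dist_eq, Real.dist_eq]
    simp only [NNReal.coe_one, one_mul]
    have h1 := dInt_lip a b
    have h2 := dInt_lip b a
    rw [abs_sub_comm] at h2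
    rw [abs_le]
    constructor <;> linarith
  exact this.continuous

lemma fEx_continuous : Continuous fEx := by
  unfold fEx
  refine Continuous.min (Continuous.min continuous_const ?_) (Continuous.min ?_ ?_)
  · exact continuous_const.mul dInt_continuous
  · exact continuous_const.mul (dInt_continuous.comp (continuous_id.sub continuous_const))
  · exact continuous_const.add
      (continuous_const.mul (dInt_continuous.comp (continuous_id.sub continuous_const)))

lemma round_eq_of {x : ℝ} {n : ℤ} (h1 : (n:ℝ) ≤ x + 1/2) (h2 : x + 1/2 < n + 1) :
    round x = n := by
  rw [round_eq]
  exact Int.floor_eq_iff.mpr ⟨h1, by exact_mod_cast h2⟩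

lemma round_spec : round ((0:ℝ)) = 0 ∧ round ((3:ℝ)/4) = 1 ∧ round ((1:ℝ)/4) = 0
    ∧ round ((1:ℝ)/2) = 1 ∧ round ((5:ℝ)/4) = 1 ∧ round ((-1:ℝ)/4) = 0
    ∧ round ((-1:ℝ)/2) = 0 ∧ round ((-3:ℝ)/4) = -1 := by
  refine ⟨?_, ?_, ?_, ?_, ?_, ?_, ?_, ?_⟩ <;> apply round_eq_of <;> push_cast <;> norm_num

lemma fEx_zero : fEx 0 = 0 := by
  obtain ⟨h0, h34, h14, h12, h54, hm14, hm12, hm34⟩ := round_spec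
  unfold fEx dInt
  rw [show (0:ℝ) - 1/2 = -1/2 by ring, show (0:ℝ) - 3/4 = -3/4 by ring, h0, hm12, hm34]
  push_cast
  rw [show (0:ℝ) - 0 = 0 by ring]
  rw [show (-1:ℝ)/2 - 0 = -1/2 by ring, show (-3:ℝ)/4 - (-1) = 1/4 by ring]
  rw [abs_of_nonneg (le_refl (0:ℝ)), abs_of_nonpos (by norm_num : (-1:ℝ)/2 ≤ 0),
      abs_of_nonneg (by norm_num : (0:ℝ) ≤ 1/4)]
  norm_num

lemma fEx_not_subadd : ¬ (∀ x y : ℝ, fEx (x + y) ≤ fEx x + fEx y) := by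
  obtain ⟨h0, h34, h14, h12, h54, hm14, hm12, hm34⟩ := round_spec
  intro h
  have := h (3/4) (1/2)
  have e1 : fEx (3/4 + 1/2) = 1 := by
    unfold fEx dInt
    rw [show (3:ℝ)/4 + 1/2 = 5/4 by ring, show (5:ℝ)/4 - 1/2 = 3/4 by ring,
        show (5:ℝ)/4 - 3/4 = 1/2 by ring, h54, h34, h12]
    push_cast
    rw [show (5:ℝ)/4 - 1 = 1/4 by ring, show (3:ℝ)/4 - 1 = -1/4 by ring,
        show (1:ℝ)/2 - 1 = -1/2 by ring]
    rw [abs_of_nonneg (by norm_num : (0:ℝ) ≤ 1/4),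
        abs_of_nonpos (by norm_num : (-1:ℝ)/4 ≤ 0),
        abs_of_nonpos (by norm_num : (-1:ℝ)/2 ≤ 0)]
    norm_num
  have e2 : fEx (3/4) = 1/2 := by
    unfold fEx dInt
    rw [show (3:ℝ)/4 - 1/2 = 1/4 by ring, show (3:ℝ)/4 - 3/4 = 0 by ring, h34, h14, h0]
    push_cast
    rw [show (3:ℝ)/4 - 1 = -1/4 by ring, show (1:ℝ)/4 - 0 = 1/4 by ring,
        show (0:ℝ) - 0 = 0 by ring]
    rw [abs_of_nonpos (by norm_num : (-1:ℝ)/4 ≤ 0),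
        abs_of_nonneg (by norm_num : (0:ℝ) ≤ 1/4), abs_of_nonneg (le_refl (0:ℝ))]
    norm_num
  have e3 : fEx (1/2) = 0 := by
    unfold fEx dInt
    rw [show (1:ℝ)/2 - 1/2 = 0 by ring, show (1:ℝ)/2 - 3/4 = -1/4 by ring, h12, h0, hm14]
    push_cast
    rw [show (1:ℝ)/2 - 1 = -1/2 by ring, show (0:ℝ) - 0 = 0 by ring,
        show (-1:ℝ)/4 - 0 = -1/4 by ring]
    rw [abs_of_nonpos (by norm_num : (-1:ℝ)/2 ≤ 0), abs_of_nonneg (le_refl (0:ℝ)),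
        abs_of_nonpos (by norm_num : (-1:ℝ)/4 ≤ 0)]
    norm_num
  rw [e1, e2, e3] at this
  linarith

theorem exists_continuous_two_subadditive_not_subadditive :
    (∃ f : ℝ → ℝ, Continuous f ∧ f 0 = 0 ∧
      (∀ x y : ℝ, f (2 * x + y) ≤ 2 * f x + f y) ∧
      ¬ (∀ x y : ℝ, f (x + y) ≤ f x + f y)) ∧
    ({f : ℝ → ℝ | Continuous f ∧ f 0 = 0 ∧ ∀ x y : ℝ, f (1 * x + y) ≤ 1 * f x + f y} ≠
      {f : ℝ → ℝ | Continuous f ∧ f 0 = 0 ∧ ∀ x y : ℝ, f (2 * x + y) ≤ 2 * f x + f y}) := by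
  constructor
  · exact ⟨fEx, fEx_continuous, fEx_zero, fEx_two_subadd, fEx_not_subadd⟩
  · intro hset
    have hmem : fEx ∈ {f : ℝ → ℝ | Continuous f ∧ f 0 = 0 ∧
        ∀ x y : ℝ, f (2 * x + y) ≤ 2 * f x + f y} :=
      ⟨fEx_continuous, fEx_zero, fEx_two_subadd⟩
    rw [← hset] at hmem
    obtain ⟨-, -, hsub⟩ := hmem
    exact fEx_not_subadd (fun x y => by simpa using hsub x y)
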